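/- Let G be a 2-connected undirected graph whose symmetric digraph G* is noneven, and let C be a reduced cycle in G of length p ≥ 6. Then no two vertices u, v of C at distance 2 on C have a common neighbor outside C. -/

import Mathlib

open Matrix

/-- `c` traces a directed cycle of length `m+1` in the digraph `R`:
distinct vertices, consecutive arcs (indices wrap around in `Fin (m+1)`). -/
def DicycleOn {V : Type*} {m : ℕ} (R : V → V → Prop) (c : Fin (m+1) → V) : Prop :=
  Function.Injective c ∧ ∀ i, R (c i) (c (i+1))

/-- A digraph is noneven if some 0,1-weighting (valued in `ZMod 2`) of its arcs makes
every directed cycle have odd total weight. -/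
def IsNoneven {V : Type*} (R : V → V → Prop) : Prop :=
  ∃ w : V → V → ZMod 2, ∀ (m : ℕ) (c : Fin (m+1) → V),
    DicycleOn R c → ∑ i, w (c i) (c (i+1)) = 1

/-- A digraph is even if every 0,1-weighting of its arcs admits a directed cycle
of even total weight. -/
def IsEvenDigraph {V : Type*} (R : V → V → Prop) : Prop :=
  ∀ w : V → V → ZMod 2, ∃ (m : ℕ) (c : Fin (m+1) → V),
    DicycleOn R c ∧ ∑ i, w (c i) (c (i+1)) = 0

def StronglyConnected {V : Type*} (R : V → V → Prop) : Prop :=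
  ∀ u v, Relation.ReflTransGen R u v

/-- Removing any single vertex leaves a strongly connected digraph. -/
def StronglyTwoConnected {V : Type*} (R : V → V → Prop) : Prop :=
  ∀ x : V, StronglyConnected (fun a b : {y : V // y ≠ x} => R a b)

def SemiComplete {V : Type*} (R : V → V → Prop) : Prop :=
  ∀ u v : V, u ≠ v → R u v ∨ R v u

/-- The digraph W₄: double arcs 0↔1 and 2↔3, single arcs 0→2, 2→1, 1→3, 3→0
(the unique 2-connected semi-complete noneven digraph on 4 vertices; every vertex
has indegree 2 and outdegree 2 and there are 8 arcs). -/
def W4 : Fin 4 → Fin 4 → Prop := fun u v =>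
  (u = 0 ∧ v = 1) ∨ (u = 1 ∧ v = 0) ∨ (u = 2 ∧ v = 3) ∨ (u = 3 ∧ v = 2) ∨
  (u = 0 ∧ v = 2) ∨ (u = 2 ∧ v = 1) ∨ (u = 1 ∧ v = 3) ∨ (u = 3 ∧ v = 0)

/-- The symmetric double 4-cycle C₄*. -/
def C4star : Fin 4 → Fin 4 → Prop := fun u v => v = u + 1 ∨ u = v + 1

def DigraphIso {V W : Type*} (R : V → V → Prop) (S : W → W → Prop) : Prop :=
  ∃ e : V ≃ W, ∀ u v, R u v ↔ S (e u) (e v)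

/-- A sign pattern: entries in {-1, 0, 1}. -/
def IsSignPattern {I : Type*} (H : Matrix I I ℝ) : Prop :=
  ∀ i j, H i j = -1 ∨ H i j = 0 ∨ H i j = 1

/-- `A ∈ Q(H)`: the matrix `A` has sign pattern `H`. -/
def HasSignPattern {I : Type*} (A H : Matrix I I ℝ) : Prop :=
  ∀ i j, Real.sign (A i j) = H i j

/-- `Q(H)` contains a symplectic pair `(A, D)` with `Aᵀ D = I`. -/
def AllowsSymplecticPairs {I : Type*} [Fintype I] [DecidableEq I] (H : Matrix I I ℝ) : Prop :=
  ∃ A D : Matrix I I ℝ, HasSignPattern A H ∧ HasSignPattern D H ∧ Aᵀ * D = 1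

def IsSignNonsingular {I : Type*} [Fintype I] [DecidableEq I] (H : Matrix I I ℝ) : Prop :=
  ∀ A : Matrix I I ℝ, HasSignPattern A H → A.det ≠ 0

def NegativeDiagonal {I : Type*} (H : Matrix I I ℝ) : Prop := ∀ i, H i i = -1

/-- The (unweighted) digraph of the pattern `H` is `R`: an arc `(i,j)`, `i ≠ j`,
exactly for the off-diagonal nonzero entries. -/
def PatternDigraph {I : Type*} (H : Matrix I I ℝ) (R : I → I → Prop) : Prop :=
  ∀ i j, i ≠ j → (H i j ≠ 0 ↔ R i j)

/-- An unweighted digraph allows symplectic pairs if some negative-diagonal sign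
pattern whose digraph is `R` allows symplectic pairs. -/
def DigraphAllowsSymplecticPairs {V : Type*} [Fintype V] [DecidableEq V]
    (R : V → V → Prop) : Prop :=
  ∃ H : Matrix V V ℝ, IsSignPattern H ∧ NegativeDiagonal H ∧
    PatternDigraph H R ∧ AllowsSymplecticPairs H

/-- Tree edges of the caterpillar tree underlying an extended caterpillar:
consecutive backbone vertices, and blossom vertices joined to their backbone vertex.
`pos` is the blossom (backbone) index of a vertex, `bb j` the backbone vertex of index `j`. -/
def CaterpillarTreeEdge {n : ℕ} (pos : Fin n → ℕ) (bb : ℕ → Fin n) (u v : Fin n) : Prop :=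
  u ≠ v ∧ ((u = bb (pos u) ∧ v = bb (pos v) ∧ (pos v = pos u + 1 ∨ pos u = pos v + 1)) ∨
           (pos u = pos v ∧ (u = bb (pos u) ∨ v = bb (pos v))))

/-- `R` is an extended caterpillar on `Fin n`, where the natural order of `Fin n`
is the backbone-induced total order: there are `k` blossoms (`pos` monotone, surjective
onto `{0, …, k-1}` with backbone vertices `bb j`); the first and last blossoms are
trivial (no blossom vertices at the ends of the backbone); and the arcs are: one arc
`u → v` for every pair `v < u`, together with both arcs of every tree edge. -/
def IsExtendedCaterpillar {n : ℕ} (R : Fin n → Fin n → Prop) : Prop :=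
  ∃ (k : ℕ) (pos : Fin n → ℕ) (bb : ℕ → Fin n),
    0 < k ∧ Monotone pos ∧ (∀ v, pos v < k) ∧ (∀ j, j < k → pos (bb j) = j) ∧
    (∀ v, pos v = 0 → v = bb 0) ∧ (∀ v, pos v = k - 1 → v = bb (k - 1)) ∧
    (∀ u v, R u v ↔ (v < u ∨ (u < v ∧ CaterpillarTreeEdge pos bb u v)))

/-- Digraphs obtainable from the symmetric double cycle `C_k*` by subdividing arcs
and splitting vertices (the weak k-double-cycles). -/
inductive WeakDoubleCycle : (k : ℕ) → (V : Type) → (V → V → Prop) → Prop where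
  | base (m : ℕ) : WeakDoubleCycle (m+1) (Fin (m+1)) (fun u v => v = u + 1 ∨ u = v + 1)
  | subdivide {k : ℕ} {V : Type} {R : V → V → Prop} (a b : V) (hab : R a b)
      (h : WeakDoubleCycle k V R) :
      WeakDoubleCycle k (Option V) (fun x y =>
        (x = some a ∧ y = none) ∨ (x = none ∧ y = some b) ∨
        (∃ u v, x = some u ∧ y = some v ∧ R u v ∧ ¬(u = a ∧ v = b)))
  | split {k : ℕ} {V : Type} {R : V → V → Prop} (a : V) (h : WeakDoubleCycle k V R) :
      WeakDoubleCycle k (Option V) (fun x y =>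
        (x = some a ∧ y = none) ∨
        (∃ v, x = none ∧ y = some v ∧ R a v) ∨
        (∃ u v, x = some u ∧ y = some v ∧ R u v ∧ u ≠ a))

/-- C₄-cockades: start with the 4-cycle; repeatedly pick an edge `(u,v)`, add two new
vertices `u', v'` and the edges `(u,u')`, `(u',v')`, `(v',v)`. -/
inductive IsC4Cockade : (V : Type) → SimpleGraph V → Prop where
  | base : IsC4Cockade (Fin 4) (SimpleGraph.fromRel (fun u v => v = u + 1))
  | attach {V : Type} {G : SimpleGraph V} (u v : V) (huv : G.Adj u v)
      (h : IsC4Cockade V G) :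
      IsC4Cockade (V ⊕ Fin 2)
        (SimpleGraph.fromRel (fun x y =>
          (∃ a b, x = Sum.inl a ∧ y = Sum.inl b ∧ G.Adj a b) ∨
          (x = Sum.inl u ∧ y = Sum.inr 0) ∨ (x = Sum.inr 0 ∧ y = Sum.inr 1) ∨
          (x = Sum.inr 1 ∧ y = Sum.inl v)))

/-- `G` is 2-connected: connected, and removing any single vertex leaves it connected. -/
def GraphTwoConnected {V : Type*} (G : SimpleGraph V) : Prop :=
  G.Connected ∧ ∀ v : V, (G.induce {u | u ≠ v}).Connected

namespace Stmt18Aux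

open SimpleGraph Walk

variable {V : Type} {G : SimpleGraph V}

lemma getVert_support_getElem {a b : V} (p : G.Walk a b) :
    ∀ i : ℕ, i ≤ p.length → p.support[i]? = some (p.getVert i) := by
  induction p with
  | nil =>
    intro i hi
    have : i = 0 := by simpa using hi
    subst this; simp
  | cons h q ih =>
    intro i hi
    cases i with
    | zero => simp
    | succ n =>
      rw [Walk.support_cons]
      simpa [Walk.getVert_cons_succ] using ih n (by simpa using hi)

lemma cycle_getVert_inj {x : V} {p : G.Walk x x} (hp : p.IsCycle)
    {i j : ℕ} (hi : i < p.length) (hj : j < p.length)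
    (h : p.getVert i = p.getVert j) : i = j := by
  have hnd : p.support.tail.Nodup := hp.support_nodup
  have hlen : p.support.tail.length = p.length := by
    have := p.length_support
    cases hs : p.support with
    | nil => simp [hs] at this
    | cons a l => simp [hs] at this ⊢; omega
  have key : ∀ k : ℕ, k ≤ p.length → k ≠ 0 →
      p.support.tail[k-1]? = some (p.getVert k) := by
    intro k hk hk0
    obtain ⟨l, rfl⟩ := Nat.exists_eq_succ_of_ne_zero hk0
    rw [List.getElem?_tail]
    simpa using getVert_support_getElem p (l+1) hk
  have inj : ∀ k₁ k₂ : ℕ, k₁ ≤ p.length → k₂ ≤ p.length → k₁ ≠ 0 → k₂ ≠ 0 →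
      p.getVert k₁ = p.getVert k₂ → k₁ = k₂ := by
    intro k₁ k₂ h1 h2 h10 h20 heq
    have e1 := key k₁ h1 h10
    have e2 := key k₂ h2 h20
    rw [heq] at e1
    have l1 : k₁ - 1 < p.support.tail.length := by omega
    have l2 : k₂ - 1 < p.support.tail.length := by omega
    rw [List.getElem?_eq_getElem l1] at e1
    rw [List.getElem?_eq_getElem l2] at e2
    have heq2 : p.support.tail[k₁-1] = p.support.tail[k₂-1] :=
      Option.some_injective _ (e1.trans e2.symm)
    have := (hnd.getElem_inj_iff).mp heq2
    omega
  rcases Nat.eq_zero_or_pos i with rfl | hi0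
  · rcases Nat.eq_zero_or_pos j with rfl | hj0
    · rfl
    · exfalso
      have hxn : p.getVert p.length = p.getVert j :=
        calc p.getVert p.length = x := p.getVert_length
          _ = p.getVert 0 := p.getVert_zero.symm
          _ = p.getVert j := h
      have := inj p.length j le_rfl hj.le (by omega) (by omega) hxn
      omega
  · rcases Nat.eq_zero_or_pos j with rfl | hj0
    · exfalso
      have hxn : p.getVert i = p.getVert p.length :=
        calc p.getVert i = p.getVert 0 := h
          _ = x := p.getVert_zero
          _ = p.getVert p.length := p.getVert_length.symm
      have := inj i p.length hi.le le_rfl (by omega) (by omega) hxn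
      omega
    · exact inj i j hi.le hj.le (by omega) (by omega) h

lemma mem_edges_index {a b : V} (p : G.Walk a b) {e : Sym2 V} (he : e ∈ p.edges) :
    ∃ i, i < p.length ∧ e = s(p.getVert i, p.getVert (i+1)) := by
  induction p with
  | nil => simp at he
  | cons h q ih =>
    rw [Walk.edges_cons, List.mem_cons] at he
    rcases he with rfl | he
    · refine ⟨0, by simp, ?_⟩
      have h1 : (Walk.cons h q).getVert 1 = _ := q.getVert_cons_succ h (n := 0)
      rw [(Walk.cons h q).getVert_zero, h1, q.getVert_zero]
    · obtain ⟨i, hi, hei⟩ := ih he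
      exact ⟨i+1, by simpa using hi, by simpa [Walk.getVert_cons_succ] using hei⟩

lemma neighbor_of_edge {x a : V} {p : G.Walk x x} (hp : p.IsCycle)
    (hax : a ≠ x) (he : s(a, x) ∈ p.edges) :
    a = p.getVert 1 ∨ a = p.getVert (p.length - 1) := by
  have hn3 : 3 ≤ p.length := hp.three_le_length
  obtain ⟨i, hi, hei⟩ := mem_edges_index p he
  rw [Sym2.eq_iff] at hei
  rcases hei with ⟨ha, hx⟩ | ⟨ha, hx⟩
  · -- ha : a = getVert i, hx : x = getVert (i+1)
    right
    have hiL : i + 1 = p.length := by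
      by_contra hne
      have hi1 : i + 1 < p.length := by omega
      have : i + 1 = 0 := cycle_getVert_inj hp hi1 (by omega)
        (by rw [p.getVert_zero]; exact hx.symm)
      omega
    rw [ha]; congr 1; omega
  · -- ha : a = getVert (i+1), hx : x = getVert i
    left
    have h0 : i = 0 := cycle_getVert_inj hp hi (by omega)
      (by rw [p.getVert_zero]; exact hx.symm)
    subst h0
    exact ha

lemma aux {x u v y : V} {p : G.Walk x x} (hp : p.IsCycle)
    (hv1 : p.getVert 1 = v) (hun : p.getVert (p.length - 1) = u)
    (huv : u ≠ v) (hy : y ∉ p.support) (huy : G.Adj u y) (hvy : G.Adj v y)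
    (hne : IsNoneven fun a b => G.Adj a b) : False := by
  obtain ⟨w, hw⟩ := hne
  have hn3 : 3 ≤ p.length := hp.three_le_length
  obtain ⟨m, hm⟩ : ∃ m, p.length = m + 1 := ⟨p.length - 1, by omega⟩
  have hm2 : 2 ≤ m := by omega
  have hadj : ∀ i : ℕ, i < p.length → G.Adj (p.getVert i) (p.getVert (i+1)) :=
    fun i hi => p.adj_getVert_succ hi
  have hyg : ∀ j : ℕ, j ≤ p.length → y ≠ p.getVert j := by
    intro j hj hj'
    exact hy (Walk.mem_support_iff_exists_getVert.mpr ⟨j, hj'.symm, hj⟩)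
  have hgm : p.getVert m = u := by rw [← hun]; congr 1; omega
  have hAxv : G.Adj x v := by
    have := hadj 0 (by omega); rwa [p.getVert_zero, hv1] at this
  have hAux : G.Adj u x := by
    have := hadj m (by omega)
    rwa [hgm, ← hm, p.getVert_length] at this
  have hux : u ≠ x := hAux.ne
  have hvx : v ≠ x := fun hcon => hAxv.ne (hcon ▸ rfl)
  have hyu : y ≠ u := by rw [← hgm]; exact hyg m (by omega)
  have hyv : y ≠ v := by rw [← hv1]; exact hyg 1 (by omega)
  have hyx : y ≠ x := by rw [← p.getVert_zero]; exact hyg 0 (by omega)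
  have hval : ∀ i : Fin (m+1), ((i+1 : Fin (m+1)) : ℕ) = (i.val + 1) % (m+1) := by
    intro i; simp [Fin.add_def]
  have hv1' : (1 : Fin (m+1)).val = 1 := by
    rw [Fin.val_one']; exact Nat.mod_eq_of_lt (by omega)
  have hone_ne : ((1 : Fin (m+1))) ≠ 0 := by
    intro hcon
    rw [hcon] at hv1'
    simp at hv1'
  -- the big cycle A
  set g : Fin (m+1) → V := fun i => p.getVert i.val with hg
  have hg_inj : Function.Injective g := by
    intro i j hij
    exact Fin.ext (cycle_getVert_inj hp (i := i.val) (j := j.val) (by omega) (by omega) hij)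
  have hg_succ : ∀ i : Fin (m+1), i.val < m → g (i+1) = p.getVert (i.val + 1) := by
    intro i him
    show p.getVert _ = _
    rw [hval i, Nat.mod_eq_of_lt (by omega)]
  have hg_last : ∀ i : Fin (m+1), i.val = m → g (i+1) = x := by
    intro i him
    show p.getVert _ = _
    rw [hval i, him, Nat.mod_self, p.getVert_zero]
  have hA : DicycleOn (fun a b => G.Adj a b) g := by
    refine ⟨hg_inj, fun i => ?_⟩
    rcases Nat.lt_or_ge i.val m with him | him
    · rw [hg_succ i him]; exact hadj i.val (by omega)
    · have him' : i.val = m := by omega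
      rw [hg_last i him']
      show G.Adj (p.getVert i.val) x
      rw [him', hgm]; exact hAux
  have hAs := hw m g hA
  -- the modified cycle E (x replaced by y)
  set h : Fin (m+1) → V := fun i => if i = (0 : Fin (m+1)) then y else p.getVert i.val
    with hh
  have hh0 : h 0 = y := by simp [hh]
  have hhne : ∀ i : Fin (m+1), i ≠ 0 → h i = p.getVert i.val := by
    intro i hi; simp [hh, hi]
  have hsucc_ne : ∀ i : Fin (m+1), i.val < m → (i + 1 : Fin (m+1)) ≠ 0 := by
    intro i him hcon
    have := hval i
    rw [hcon] at this
    simp [Nat.mod_eq_of_lt (by omega : i.val + 1 < m + 1)] at this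
  have hlastF : ((⟨m, by omega⟩ : Fin (m+1)) + 1) = (0 : Fin (m+1)) := by
    apply Fin.ext
    rw [hval]
    simp
  have hE : DicycleOn (fun a b => G.Adj a b) h := by
    constructor
    · intro i j hij
      by_cases hi : i = 0 <;> by_cases hj : j = 0
      · rw [hi, hj]
      · rw [hi, hh0, hhne j hj] at hij
        exact absurd hij (hyg j.val (by omega))
      · rw [hj, hh0, hhne i hi] at hij
        exact absurd hij.symm (hyg i.val (by omega))
      · rw [hhne i hi, hhne j hj] at hij
        exact Fin.ext (cycle_getVert_inj hp (by omega) (by omega) hij)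
    · intro i
      by_cases hi : i = 0
      · subst hi
        rw [hh0, zero_add, hhne 1 hone_ne, hv1', hv1]
        exact hvy.symm
      · rcases Nat.lt_or_ge i.val m with him | him
        · rw [hhne i hi, hhne (i+1) (hsucc_ne i him)]
          have : ((i+1 : Fin (m+1)) : ℕ) = i.val + 1 := by
            rw [hval i, Nat.mod_eq_of_lt (by omega)]
          rw [this]
          exact hadj i.val (by omega)
        · have him' : i.val = m := by omega
          have hieq : i = (⟨m, by omega⟩ : Fin (m+1)) := Fin.ext him'
          rw [hhne i hi, him', hgm, hieq, hlastF, hh0]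
          exact huy
  have hEs := hw m h hE
  -- difference of the two big sums
  have hlast_ne : (⟨m, by omega⟩ : Fin (m+1)) ≠ 0 := by
    intro hcon
    have : m = 0 := by simpa using congrArg Fin.val hcon
    omega
  have h0_ne_last : (0 : Fin (m+1)) ≠ ⟨m, by omega⟩ := by
    intro hcon
    have : 0 = m := by simpa using congrArg Fin.val hcon
    omega
  have hzz : ∀ a : ZMod 2, a + a = 0 := by decide
  have hsum : ∑ i : Fin (m+1), (w (g i) (g (i+1)) + w (h i) (h (i+1)))
      = (w x v + w y v) + (w u x + w u y) := by
    rw [← Finset.sum_subset (Finset.subset_univ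
      ({0, ⟨m, by omega⟩} : Finset (Fin (m+1)))) ?vanish]
    case vanish =>
      intro i _ hi
      simp only [Finset.mem_insert, Finset.mem_singleton] at hi
      push_neg at hi
      obtain ⟨hi0, hil⟩ := hi
      have hivm : i.val < m := by
        have h1 := i.isLt
        have h2 : i.val ≠ m := fun hcon => hil (Fin.ext hcon)
        omega
      rw [hhne i hi0, hhne (i+1) (hsucc_ne i hivm)]
      exact hzz _
    rw [Finset.sum_pair (by exact h0_ne_last)]
    have e1 : g 0 = x := p.getVert_zero
    have e2 : g (0 + 1) = v := by
      rw [zero_add]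
      show p.getVert (1 : Fin (m+1)).val = v
      rw [hv1', hv1]
    have e3 : h (0+1) = v := by
      rw [zero_add, hhne 1 hone_ne, hv1', hv1]
    have e4 : g (⟨m, by omega⟩ : Fin (m+1)) = u := hgm
    have e5 : g ((⟨m, by omega⟩ : Fin (m+1)) + 1) = x := hg_last _ rfl
    have e6 : h (⟨m, by omega⟩ : Fin (m+1)) = u := by
      rw [hhne _ hlast_ne]; exact hgm
    have e7 : h ((⟨m, by omega⟩ : Fin (m+1)) + 1) = y := by rw [hlastF, hh0]
    rw [e1, e2, e3, e4, e5, e6, e7, hh0]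
  have hcomb : (1 : ZMod 2) + 1 = (w x v + w y v) + (w u x + w u y) := by
    rw [Finset.sum_add_distrib, hAs, hEs] at hsum
    exact hsum
  -- the 4-cycle u x v y
  set k4 : Fin 4 → V := ![u, x, v, y] with hk4
  have k40 : k4 0 = u := rfl
  have k41 : k4 1 = x := rfl
  have k42 : k4 2 = v := rfl
  have k43 : k4 3 = y := rfl
  have hK4 : DicycleOn (fun a b => G.Adj a b) k4 := by
    constructor
    · rw [hk4, ← List.nodup_ofFn]
      simp [hux, huv, hyu.symm, hvx.symm, hyx.symm, hyv.symm,
        hux.symm, huv.symm, hvx, hyx, hyv, hyu]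
    · intro i
      fin_cases i
      · show G.Adj (k4 0) (k4 (0+1))
        rw [show (0+1 : Fin 4) = 1 by decide, k40, k41]
        exact hAux
      · show G.Adj (k4 1) (k4 (1+1))
        rw [show (1+1 : Fin 4) = 2 by decide, k41, k42]
        exact hAxv
      · show G.Adj (k4 2) (k4 (2+1))
        rw [show (2+1 : Fin 4) = 3 by decide, k42, k43]
        exact hvy
      · show G.Adj (k4 3) (k4 (3+1))
        rw [show (3+1 : Fin 4) = 0 by decide, k43, k40]
        exact huy.symm
  have hK4s : w u x + w x v + w v y + w y u = 1 := by
    have hs := hw 3 k4 hK4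
    rw [Fin.sum_univ_four] at hs
    rw [show (0+1 : Fin 4) = 1 by decide, show (1+1 : Fin 4) = 2 by decide,
      show (2+1 : Fin 4) = 3 by decide, show (3+1 : Fin 4) = 0 by decide,
      k40, k41, k42, k43] at hs
    exact hs
  -- the 2-cycles
  have two_cycle : ∀ a b : V, G.Adj a b → w a b + w b a = 1 := by
    intro a b hab
    set k2 : Fin 2 → V := ![a, b] with hk2
    have k20 : k2 0 = a := rfl
    have k21 : k2 1 = b := rfl
    have hK2 : DicycleOn (fun a b => G.Adj a b) k2 := by
      constructor
      · rw [hk2, ← List.nodup_ofFn]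
        simp [hab.ne]
      · intro i
        fin_cases i
        · show G.Adj (k2 0) (k2 (0+1))
          rw [show (0+1 : Fin 2) = 1 by decide, k20, k21]
          exact hab
        · show G.Adj (k2 1) (k2 (1+1))
          rw [show (1+1 : Fin 2) = 0 by decide, k20, k21]
          exact hab.symm
    have hs := hw 1 k2 hK2
    rw [Fin.sum_univ_two, show (0+1 : Fin 2) = 1 by decide,
      show (1+1 : Fin 2) = 0 by decide, k20, k21] at hs
    exact hs
  have hT1 : w u y + w y u = 1 := two_cycle u y huy
  have hT2 : w y v + w v y = 1 := two_cycle y v hvy.symm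
  have final : ∀ P Q R S T O : ZMod 2,
      (1 : ZMod 2) + 1 = (Q + S) + (P + T) → P + Q + R + O = 1 →
      T + O = 1 → S + R = 1 → False := by decide
  exact final (w u x) (w x v) (w v y) (w y v) (w u y) (w y u) hcomb hK4s hT1 hT2

lemma main {v₀ : V} (c : G.Walk v₀ v₀) (hc : c.IsCycle)
    (u v x y : V) (hux : s(u, x) ∈ c.edges) (hxv : s(x, v) ∈ c.edges) (huv : u ≠ v)
    (hy : y ∉ c.support) (huy : G.Adj u y) (hvy : G.Adj v y)
    (hne : IsNoneven fun a b => G.Adj a b) : False := by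
  classical
  have hx : x ∈ c.support := c.snd_mem_support_of_mem_edges hux
  set d := c.rotate x hx with hd
  have hdc : d.IsCycle := hc.rotate hx
  have hyd : y ∉ d.support := by
    intro hmem
    rw [d.support_eq_cons, List.mem_cons] at hmem
    rcases hmem with rfl | hmem
    · exact hy hx
    · exact hy (List.mem_of_mem_tail ((c.support_rotate x hx).mem_iff.mp hmem))
  have hAux : G.Adj u x := (SimpleGraph.mem_edgeSet G).mp (c.edges_subset_edgeSet hux)
  have hAxv : G.Adj x v := (SimpleGraph.mem_edgeSet G).mp (c.edges_subset_edgeSet hxv)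
  have hud : s(u, x) ∈ d.edges := (c.rotate_edges x hx).mem_iff.mpr hux
  have hvd : s(v, x) ∈ d.edges := by
    rw [Sym2.eq_swap]
    exact (c.rotate_edges x hx).mem_iff.mpr hxv
  have hu := neighbor_of_edge hdc hAux.ne hud
  have hv := neighbor_of_edge hdc (fun hcon => hAxv.ne hcon.symm) hvd
  rcases hu with hu | hu <;> rcases hv with hv | hv
  · exact huv (hu.trans hv.symm)
  · exact aux hdc hu.symm hv.symm huv.symm hyd hvy huy hne
  · exact aux hdc hv.symm hu.symm huv hyd huy hvy hne
  · exact huv (hu.trans hv.symm)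

end Stmt18Aux

/-- in a 2-connected graph with noneven G*, two vertices at distance 2
on a reduced cycle of length ≥ 6 have no common neighbor outside the cycle. -/
theorem stmt18 {V : Type} (G : SimpleGraph V) (h2 : GraphTwoConnected G)
    (hne : IsNoneven fun u v => G.Adj u v)
    (v₀ : V) (c : G.Walk v₀ v₀) (hc : c.IsCycle) (hlen : 6 ≤ c.length)
    (hred : ∀ u w, u ∈ c.support → w ∈ c.support → G.Adj u w → s(u, w) ∈ c.edges)
    (u v x : V) (hux : s(u, x) ∈ c.edges) (hxv : s(x, v) ∈ c.edges) (huv : u ≠ v) :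
    ¬ ∃ y, y ∉ c.support ∧ G.Adj u y ∧ G.Adj v y := by
  rintro ⟨y, hy, huy, hvy⟩
  exact Stmt18Aux.main c hc u v x y hux hxv huv hy huy hvy hne
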